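/- Let A = [b₁,c₁]×…×[b_n,c_n] be a trapping region for the freeway system x₁⁺ = x₁ − min(a₂−x₂, f₁(x₁)) + min(a₁−x₁, v), x_i⁺ = x_i − min(a_{i+1}−x_{i+1}, f_i(x_i)) + min(a_i−x_i, f_{i−1}(x_{i−1})) for 2 ≤ i ≤ n−1, x_n⁺ = x_n − f_n(x_n) + min(a_n−x_n, f_{n−1}(x_{n−1})). Suppose c ∈ [0,c₁] with c ≥ x₁* satisfies: min_{c ≤ s ≤ c₁}(min(a₂−c₂, f₁(s)) − min(a₁−s, v)) > 0 and max_{b₁ ≤ s ≤ c}(s − min(a₂−c₂, f₁(s)) + min(a₁−s, v)) ≤ c. Then the set [b₁,c]×[b₂,c₂]×…×[b_n,c_n] is also a trapping region for the system. -/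

import Mathlib

/-- One step of the freeway dynamics (components indexed `1,…,n`). -/
def FreewayStep (n : ℕ) (a : ℕ → ℝ) (f : ℕ → ℝ → ℝ) (v : ℝ) (x : ℕ → ℝ) : ℕ → ℝ :=
  fun i =>
    if i = 1 then x 1 - min (a 2 - x 2) (f 1 (x 1)) + min (a 1 - x 1) v
    else if i = n then x n - f n (x n) + min (a n - x n) (f (n - 1) (x (n - 1)))
    else x i - min (a (i + 1) - x (i + 1)) (f i (x i)) +
      min (a i - x i) (f (i - 1) (x (i - 1)))

/-- Membership in the box `[lo 1, hi 1] × … × [lo n, hi n]`. -/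
def InBox (n : ℕ) (lo hi : ℕ → ℝ) (x : ℕ → ℝ) : Prop :=
  ∀ i, 1 ≤ i → i ≤ n → lo i ≤ x i ∧ x i ≤ hi i

/-- The box `[lo 1, hi 1] × … × [lo n, hi n]` is a trapping region for the freeway system:
all solutions starting in the state space `[0,a₁]×…×[0,aₙ]` enter the box after at most
`m` steps and stay there. -/
def IsTrappingBox (n : ℕ) (a : ℕ → ℝ) (f : ℕ → ℝ → ℝ) (v : ℝ) (lo hi : ℕ → ℝ) : Prop :=
  ∃ m : ℕ, ∀ x : ℕ → ℕ → ℝ,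
    InBox n (fun _ => 0) a (x 0) →
    (∀ t, x (t + 1) = FreewayStep n a f v (x t)) →
    ∀ t, m ≤ t → InBox n lo hi (x t)

theorem stmt_12 (n : ℕ) (hn : 3 ≤ n)
    (a : ℕ → ℝ) (ha : ∀ i, 1 ≤ i → i ≤ n → 0 < a i)
    (f : ℕ → ℝ → ℝ)
    (hfc : ∀ i, 1 ≤ i → i ≤ n → ContinuousOn (f i) (Set.Icc 0 (a i)))
    (hf : ∀ i, 1 ≤ i → i ≤ n → ∀ s ∈ Set.Icc (0 : ℝ) (a i), 0 ≤ f i s ∧ f i s ≤ s)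
    (v : ℝ) (hv : 0 < v)
    (xstar : ℕ → ℝ)
    (hxstar : ∀ i, 1 ≤ i → i ≤ n →
      xstar i ∈ Set.Icc (0 : ℝ) (a i) ∧ f i (xstar i) = v ∧ xstar i + v < a i)
    (b cbar : ℕ → ℝ)
    (hbc : ∀ i, 1 ≤ i → i ≤ n → 0 ≤ b i ∧ b i < cbar i ∧ cbar i ≤ a i)
    (htrap : IsTrappingBox n a f v b cbar)
    (c : ℝ) (hc0 : 0 ≤ c) (hc1 : c ≤ cbar 1) (hcx : xstar 1 ≤ c)
    (hmin : 0 < sInf ((fun s => min (a 2 - cbar 2) (f 1 s) - min (a 1 - s) v) ''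
      Set.Icc c (cbar 1)))
    (hmax : sSup ((fun s => s - min (a 2 - cbar 2) (f 1 s) + min (a 1 - s) v) ''
      Set.Icc (b 1) c) ≤ c) :
    IsTrappingBox n a f v b (Function.update cbar 1 c) := by

  classical
  obtain ⟨m, hm⟩ := htrap
  have hb1 : 0 ≤ b 1 := (hbc 1 le_rfl (by omega)).1
  have hcb1 : cbar 1 ≤ a 1 := (hbc 1 le_rfl (by omega)).2.2
  have hsub1 : Set.Icc (b 1) c ⊆ Set.Icc 0 (a 1) :=
    Set.Icc_subset_Icc hb1 (hc1.trans hcb1)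
  have hsub2 : Set.Icc c (cbar 1) ⊆ Set.Icc 0 (a 1) :=
    Set.Icc_subset_Icc hc0 hcb1
  have hf1 : ContinuousOn (f 1) (Set.Icc 0 (a 1)) := hfc 1 le_rfl (by omega)
  have hgc : ContinuousOn (fun s => min (a 2 - cbar 2) (f 1 s) - min (a 1 - s) v)
      (Set.Icc 0 (a 1)) := by
    apply ContinuousOn.sub
    · exact continuous_min.comp_continuousOn (continuousOn_const.prodMk hf1)
    · exact ((continuous_const.sub continuous_id).min continuous_const).continuousOn
  have hhc : ContinuousOn (fun s => s - min (a 2 - cbar 2) (f 1 s) + min (a 1 - s) v)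
      (Set.Icc 0 (a 1)) := by
    apply ContinuousOn.add
    · exact continuousOn_id.sub (continuous_min.comp_continuousOn (continuousOn_const.prodMk hf1))
    · exact ((continuous_const.sub continuous_id).min continuous_const).continuousOn
  have hbdd1 : BddBelow ((fun s => min (a 2 - cbar 2) (f 1 s) - min (a 1 - s) v) ''
      Set.Icc c (cbar 1)) :=
    (isCompact_Icc.image_of_continuousOn (hgc.mono hsub2)).bddBelow
  have hbdd2 : BddAbove ((fun s => s - min (a 2 - cbar 2) (f 1 s) + min (a 1 - s) v) ''
      Set.Icc (b 1) c) :=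
    (isCompact_Icc.image_of_continuousOn (hhc.mono hsub1)).bddAbove
  set ε := sInf ((fun s => min (a 2 - cbar 2) (f 1 s) - min (a 1 - s) v) ''
      Set.Icc c (cbar 1)) with hε
  set N := Nat.ceil ((cbar 1 - c) / ε) with hN
  refine ⟨m + N, ?_⟩
  intro x hx0 hstep
  have hbox : ∀ t, m ≤ t → InBox n b cbar (x t) := hm x hx0 hstep
  have hx1 : ∀ t, x (t + 1) 1 =
      x t 1 - min (a 2 - x t 2) (f 1 (x t 1)) + min (a 1 - x t 1) v := by
    intro t; rw [hstep t]; simp [FreewayStep]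
  have hmono : ∀ t, m ≤ t →
      min (a 2 - cbar 2) (f 1 (x t 1)) ≤ min (a 2 - x t 2) (f 1 (x t 1)) := by
    intro t ht
    have h2 : x t 2 ≤ cbar 2 := ((hbox t ht) 2 (by omega) (by omega)).2
    exact min_le_min (by linarith) le_rfl
  have S1 : ∀ t, m ≤ t → x t 1 ≤ c → x (t + 1) 1 ≤ c := by
    intro t ht hle
    have hb : b 1 ≤ x t 1 := ((hbox t ht) 1 (by omega) (by omega)).1
    have h2 : x t 1 - min (a 2 - cbar 2) (f 1 (x t 1)) + min (a 1 - x t 1) v ≤ c :=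
      (le_csSup hbdd2 ⟨x t 1, ⟨hb, hle⟩, rfl⟩).trans hmax
    have h1 := hmono t ht
    rw [hx1 t]
    linarith
  have S2 : ∀ t, m ≤ t → c ≤ x t 1 → x (t + 1) 1 ≤ x t 1 - ε := by
    intro t ht hge
    have hub : x t 1 ≤ cbar 1 := ((hbox t ht) 1 (by omega) (by omega)).2
    have h2 : ε ≤ min (a 2 - cbar 2) (f 1 (x t 1)) - min (a 1 - x t 1) v :=
      csInf_le hbdd1 ⟨x t 1, ⟨hge, hub⟩, rfl⟩
    have h1 := hmono t ht
    rw [hx1 t]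
    linarith
  have key : ∀ k : ℕ, x (m + k) 1 ≤ c ∨ x (m + k) 1 ≤ cbar 1 - k * ε := by
    intro k
    induction k with
    | zero =>
      right
      have h0 := ((hbox m le_rfl) 1 (by omega) (by omega)).2
      simp only [Nat.add_zero, Nat.cast_zero, zero_mul, sub_zero]
      exact h0
    | succ k ih =>
      rcases ih with h | h
      · left
        exact S1 (m + k) (by omega) h
      · rcases le_or_gt (x (m + k) 1) c with h' | h'
        · left
          exact S1 (m + k) (by omega) h'
        · right
          have h3 := S2 (m + k) (by omega) h'.le
          have heq : m + (k + 1) = m + k + 1 := rfl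
          rw [heq]
          push_cast at h ⊢
          linarith
  have hNε : cbar 1 - (N : ℝ) * ε ≤ c := by
    have h1 : (cbar 1 - c) / ε ≤ (N : ℝ) := Nat.le_ceil _
    have h2 : cbar 1 - c ≤ (N : ℝ) * ε := by
      rw [div_le_iff₀ hmin] at h1; linarith
    linarith
  have hmN : x (m + N) 1 ≤ c := by
    rcases key N with h | h
    · exact h
    · linarith
  have hfin : ∀ t, m + N ≤ t → x t 1 ≤ c := by
    intro t ht
    induction t, ht using Nat.le_induction with
    | base => exact hmN
    | succ t ht ih => exact S1 t (by omega) ih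
  intro t ht i hi1 hin
  have hb := hbox t (by omega) i hi1 hin
  by_cases h1 : i = 1
  · subst h1
    refine ⟨hb.1, ?_⟩
    rw [Function.update_self]
    exact hfin t ht
  · rw [Function.update_of_ne h1]
    exact hb
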